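/- Let Γ ⊆ ℝ² be the unit circle centred at the origin, and for x, y ∈ Γ let ρ(x,y) = arccos⟨x,y⟩ denote the arc-distance (the length of the shorter arc of Γ between x and y). Let ε > 0, let X ⊆ Γ be a closed arc of Γ of length ε, and let Y = {y ∈ Γ : ρ(x,y) ≥ 5ε for all x ∈ X}. Let V ⊆ Γ be a finite set all of whose points are extreme points of P = conv(V). Let v, w, p₁, p₂, q₁, q₂ ∈ V with v, p₁, p₂ ∈ X and w, q₁, q₂ ∈ Y, where p₁ ≠ p₂ and q₁ ≠ q₂. Suppose the segment [p₁,p₂] is an edge of P, i.e. all points of V ∖ {p₁,p₂} lie strictly on one side of the line ℓ_f through p₁ and p₂, and likewise [q₁,q₂] is an edge of P with line ℓ_g through q₁ and q₂. Then dist(v, ℓ_f) · dist(w, ℓ_g) ≤ dist(v, ℓ_g) · dist(w, ℓ_f), where dist denotes the Euclidean distance from a point to a line. -/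

import Mathlib

open scoped RealInnerProductSpace

/-- The arc-distance between two points of the unit circle: the angle `arccos⟨x,y⟩`. -/
noncomputable def arcDist (x y : EuclideanSpace ℝ (Fin 2)) : ℝ :=
  Real.arccos ⟪x, y⟫

section Helpers

open Real

noncomputable def pt (θ : ℝ) : EuclideanSpace ℝ (Fin 2) := WithLp.toLp 2 ![Real.cos θ, Real.sin θ]

lemma pt0 (θ : ℝ) : pt θ 0 = Real.cos θ := rfl
lemma pt1 (θ : ℝ) : pt θ 1 = Real.sin θ := rfl

lemma inner2 (x y : EuclideanSpace ℝ (Fin 2)) : ⟪x, y⟫ = x 0 * y 0 + x 1 * y 1 := by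
  simp [PiLp.inner_apply, Fin.sum_univ_two, RCLike.inner_apply, mul_comm]

lemma ext2 (x y : EuclideanSpace ℝ (Fin 2)) (h0 : x 0 = y 0) (h1 : x 1 = y 1) : x = y := by
  ext i; fin_cases i <;> assumption

lemma inner_pt (θ φ : ℝ) : ⟪pt θ, pt φ⟫ = Real.cos (θ - φ) := by
  rw [inner2, pt0, pt0, pt1, pt1, Real.cos_sub]

lemma norm_pt (θ : ℝ) : ‖pt θ‖ = 1 := by
  rw [show (1:ℝ) = Real.sqrt 1 by simp]
  rw [EuclideanSpace.norm_eq]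
  congr 1
  simp [Fin.sum_univ_two, pt0, pt1, Real.norm_eq_abs, sq_abs]

lemma infDist_hyperplane (n x : EuclideanSpace ℝ (Fin 2)) (c : ℝ) (hn : ‖n‖ = 1) :
    Metric.infDist x {y : EuclideanSpace ℝ (Fin 2) | ⟪n, y⟫ = c} = |⟪n, x⟫ - c| := by
  have hnn : ⟪n, n⟫ = 1 := by
    rw [real_inner_self_eq_norm_sq, hn]; norm_num
  set z : EuclideanSpace ℝ (Fin 2) := x - (⟪n, x⟫ - c) • n with hz
  have hzmem : z ∈ {y : EuclideanSpace ℝ (Fin 2) | ⟪n, y⟫ = c} := by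
    simp only [hz, Set.mem_setOf_eq, inner_sub_right, inner_smul_right, hnn]
    ring
  refine le_antisymm ?_ ?_
  · refine le_trans (Metric.infDist_le_dist_of_mem hzmem) ?_
    rw [dist_eq_norm, hz]
    simp [norm_smul, hn]
  · rw [Metric.infDist_eq_iInf]
    haveI : Nonempty ↑{y : EuclideanSpace ℝ (Fin 2) | ⟪n, y⟫ = c} := ⟨⟨z, hzmem⟩⟩
    refine le_ciInf fun y => ?_
    have h1 : |⟪n, x - (y : EuclideanSpace ℝ (Fin 2))⟫| ≤
        ‖n‖ * ‖x - (y : EuclideanSpace ℝ (Fin 2))‖ := abs_real_inner_le_norm _ _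
    rw [inner_sub_right, y.2, hn, one_mul] at h1
    rw [dist_eq_norm]
    exact h1

lemma span_pair_eq_hyperplane (p₁ p₂ n : EuclideanSpace ℝ (Fin 2)) (c : ℝ)
    (hne : p₁ ≠ p₂) (hn : n ≠ 0) (h1 : ⟪n, p₁⟫ = c) (h2 : ⟪n, p₂⟫ = c) :
    (affineSpan ℝ ({p₁, p₂} : Set (EuclideanSpace ℝ (Fin 2))) :
      Set (EuclideanSpace ℝ (Fin 2))) = {y | ⟪n, y⟫ = c} := by
  ext y
  constructor
  · intro hy
    have hy' : (y - p₁) +ᵥ p₁ ∈ affineSpan ℝ ({p₁, p₂} : Set (EuclideanSpace ℝ (Fin 2))) := by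
      simpa using hy
    rw [vadd_left_mem_affineSpan_pair] at hy'
    obtain ⟨r, hr⟩ := hy'
    have : y = p₁ + r • (p₂ - p₁) := by
      have := hr
      simp only [vsub_eq_sub] at this
      rw [this]; abel
    simp only [Set.mem_setOf_eq, this, inner_add_right, inner_smul_right, inner_sub_right, h1, h2]
    ring
  · intro hy
    have hy' : ⟪n, y⟫ = c := hy
    set u : EuclideanSpace ℝ (Fin 2) := y - p₁ with hu
    set w : EuclideanSpace ℝ (Fin 2) := p₂ - p₁ with hw
    have hnu : n 0 * u 0 + n 1 * u 1 = 0 := by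
      have : ⟪n, u⟫ = 0 := by rw [hu, inner_sub_right, hy', h1, sub_self]
      rwa [inner2] at this
    have hnw : n 0 * w 0 + n 1 * w 1 = 0 := by
      have : ⟪n, w⟫ = 0 := by rw [hw, inner_sub_right, h1, h2, sub_self]
      rwa [inner2] at this
    have hnz : n 0 ≠ 0 ∨ n 1 ≠ 0 := by
      by_contra h
      push_neg at h
      exact hn (ext2 n 0 h.1 h.2)
    have hdet : u 0 * w 1 - u 1 * w 0 = 0 := by
      rcases hnz with h | h
      · have : n 0 * (u 0 * w 1 - u 1 * w 0) = 0 := by linear_combination w 1 * hnu - u 1 * hnw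
        exact (mul_eq_zero.mp this).resolve_left h
      · have : n 1 * (u 0 * w 1 - u 1 * w 0) = 0 := by linear_combination u 0 * hnw - w 0 * hnu
        exact (mul_eq_zero.mp this).resolve_left h
    have hwne : w ≠ 0 := by
      rw [hw, sub_ne_zero]; exact fun h => hne h.symm
    have hwz : w 0 ≠ 0 ∨ w 1 ≠ 0 := by
      by_contra h
      push_neg at h
      exact hwne (ext2 w 0 h.1 h.2)
    have key : ∃ r : ℝ, u = r • w := by
      rcases hwz with h | h
      · refine ⟨u 0 / w 0, ext2 _ _ ?_ ?_⟩
        · simp [PiLp.smul_apply, smul_eq_mul]; field_simp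
        · simp [PiLp.smul_apply, smul_eq_mul]; field_simp; nlinarith [hdet]
      · refine ⟨u 1 / w 1, ext2 _ _ ?_ ?_⟩
        · simp [PiLp.smul_apply, smul_eq_mul]; field_simp; nlinarith [hdet]
        · simp [PiLp.smul_apply, smul_eq_mul]; field_simp
    obtain ⟨r, hr⟩ := key
    have : u +ᵥ p₁ ∈ affineSpan ℝ ({p₁, p₂} : Set (EuclideanSpace ℝ (Fin 2))) := by
      rw [vadd_left_mem_affineSpan_pair]
      exact ⟨r, by rw [hr]; simp [hw]⟩
    simpa [hu] using this

lemma chord_dist (θ θ₁ θ₂ : ℝ) (hne : pt θ₁ ≠ pt θ₂) :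
    Metric.infDist (pt θ) (affineSpan ℝ ({pt θ₁, pt θ₂} : Set (EuclideanSpace ℝ (Fin 2))) :
      Set (EuclideanSpace ℝ (Fin 2))) =
      |2 * (Real.sin ((θ - θ₁) / 2) * Real.sin ((θ - θ₂) / 2))| := by
  have hn1 : ‖pt ((θ₁ + θ₂) / 2)‖ = 1 := norm_pt _
  have hn0 : pt ((θ₁ + θ₂) / 2) ≠ 0 := by
    intro h
    rw [h] at hn1
    simp at hn1
  have h1 : ⟪pt ((θ₁ + θ₂) / 2), pt θ₁⟫ = Real.cos ((θ₂ - θ₁) / 2) := by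
    rw [inner_pt, show (θ₁ + θ₂) / 2 - θ₁ = (θ₂ - θ₁) / 2 by ring]
  have h2 : ⟪pt ((θ₁ + θ₂) / 2), pt θ₂⟫ = Real.cos ((θ₂ - θ₁) / 2) := by
    rw [inner_pt, show (θ₁ + θ₂) / 2 - θ₂ = -((θ₂ - θ₁) / 2) by ring, Real.cos_neg]
  rw [span_pair_eq_hyperplane _ _ _ _ hne hn0 h1 h2, infDist_hyperplane _ _ _ hn1, inner_pt]
  have e := Real.cos_sub_cos ((θ₁ + θ₂) / 2 - θ) ((θ₂ - θ₁) / 2)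
  rw [show ((θ₁ + θ₂) / 2 - θ + (θ₂ - θ₁) / 2) / 2 = -((θ - θ₂) / 2) by ring,
    show ((θ₁ + θ₂) / 2 - θ - (θ₂ - θ₁) / 2) / 2 = -((θ - θ₁) / 2) by ring,
    Real.sin_neg, Real.sin_neg] at e
  rw [show Real.cos ((θ₁ + θ₂) / 2 - θ) - Real.cos ((θ₂ - θ₁) / 2) =
    -(2 * (Real.sin ((θ - θ₁) / 2) * Real.sin ((θ - θ₂) / 2))) by rw [e]; ring, abs_neg]

lemma exists_angle (x : EuclideanSpace ℝ (Fin 2))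
    (hx : x ∈ Metric.sphere (0 : EuclideanSpace ℝ (Fin 2)) 1) :
    ∃ θ : ℝ, x = pt θ := by
  have hn : ‖x‖ = 1 := by simpa using hx
  have hsq : (x 0) ^ 2 + (x 1) ^ 2 = 1 := by
    have h := hn
    rw [EuclideanSpace.norm_eq, Fin.sum_univ_two] at h
    have := congrArg (· ^ 2) h
    simp only [Real.sq_sqrt (by positivity : (0:ℝ) ≤ ‖x 0‖ ^ 2 + ‖x 1‖ ^ 2)] at this
    simpa [Real.norm_eq_abs, sq_abs] using this
  have hx0 : -1 ≤ x 0 ∧ x 0 ≤ 1 := by constructor <;> nlinarith [sq_nonneg (x 1)]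
  have hcos : Real.cos (Real.arccos (x 0)) = x 0 := Real.cos_arccos hx0.1 hx0.2
  have hsin : Real.sin (Real.arccos (x 0)) = Real.sqrt (1 - x 0 ^ 2) := Real.sin_arccos _
  have h1sq : Real.sqrt (1 - x 0 ^ 2) = |x 1| := by
    rw [show 1 - x 0 ^ 2 = (x 1) ^ 2 by linarith, Real.sqrt_sq_eq_abs]
  rcases le_total 0 (x 1) with h | h
  · exact ⟨Real.arccos (x 0), ext2 _ _ (by rw [pt0, hcos]) (by
      rw [pt1, hsin, h1sq, abs_of_nonneg h])⟩
  · refine ⟨-Real.arccos (x 0), ext2 _ _ (by rw [pt0, Real.cos_neg, hcos]) ?_⟩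
    rw [pt1, Real.sin_neg, hsin, h1sq, abs_of_nonpos h]
    ring

lemma Yangle {ε θ₀ : ℝ} (hε : 0 < ε) (y : EuclideanSpace ℝ (Fin 2))
    (hsph : y ∈ Metric.sphere (0 : EuclideanSpace ℝ (Fin 2)) 1)
    (hA : 5 * ε ≤ Real.arccos ⟪pt θ₀, y⟫)
    (hB : 5 * ε ≤ Real.arccos ⟪pt (θ₀ + ε), y⟫) :
    ∃ γ : ℝ, y = pt (θ₀ + γ) ∧ 6 * ε ≤ γ ∧ γ ≤ 2 * π - 5 * ε := by
  have hπ : 0 < π := Real.pi_pos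
  have h5π : 5 * ε ≤ π := le_trans hA (Real.arccos_le_pi _)
  obtain ⟨ψ, hψ⟩ := exists_angle y hsph
  set k : ℤ := ⌊(ψ - θ₀) / (2 * π)⌋ with hk
  set γ : ℝ := ψ - θ₀ - 2 * π * (k : ℝ) with hγ
  have hfl := Int.floor_le ((ψ - θ₀) / (2 * π))
  have hfl2 := Int.lt_floor_add_one ((ψ - θ₀) / (2 * π))
  have h2π : (0:ℝ) < 2 * π := by linarith
  have hγ0 : 0 ≤ γ := by
    rw [hγ]
    have := mul_le_mul_of_nonneg_right hfl h2π.le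
    rw [div_mul_cancel₀ _ h2π.ne'] at this
    linarith
  have hγ2π : γ < 2 * π := by
    rw [hγ]
    have := mul_lt_mul_of_pos_right hfl2 h2π
    rw [div_mul_cancel₀ _ h2π.ne'] at this
    linarith
  have hypt : y = pt (θ₀ + γ) := by
    rw [hψ]
    refine ext2 _ _ ?_ ?_
    · rw [pt0, pt0, show ψ = θ₀ + γ + (k : ℝ) * (2 * π) by rw [hγ]; ring,
        Real.cos_add_int_mul_two_pi]
    · rw [pt1, pt1, show ψ = θ₀ + γ + (k : ℝ) * (2 * π) by rw [hγ]; ring,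
        Real.sin_add_int_mul_two_pi]
  rw [hypt] at hA hB
  rw [inner_pt, show θ₀ - (θ₀ + γ) = -γ by ring, Real.cos_neg] at hA
  rw [inner_pt, show θ₀ + ε - (θ₀ + γ) = -(γ - ε) by ring, Real.cos_neg] at hB
  have hstep1 : 5 * ε ≤ γ ∧ γ ≤ 2 * π - 5 * ε := by
    rcases le_total γ π with h | h
    · rw [Real.arccos_cos hγ0 h] at hA
      exact ⟨hA, by linarith⟩
    · rw [← Real.cos_two_pi_sub, Real.arccos_cos (by linarith) (by linarith)] at hA
      exact ⟨by linarith, by linarith⟩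
  have hstep2 : 6 * ε ≤ γ := by
    rcases le_total (γ - ε) π with h | h
    · rw [Real.arccos_cos (by linarith [hstep1.1]) h] at hB
      linarith
    · linarith
  exact ⟨γ, hypt, hstep2, hstep1.2⟩

lemma abs_sin_le_abs' (x : ℝ) : |Real.sin x| ≤ |x| := by
  have key : ∀ z : ℝ, 0 ≤ z → |Real.sin z| ≤ z := by
    intro z hz
    rcases le_total z π with h2 | h2
    · rw [abs_of_nonneg (Real.sin_nonneg_of_nonneg_of_le_pi hz h2)]
      exact Real.sin_le hz
    · refine le_trans (abs_le.2 ⟨Real.neg_one_le_sin z, Real.sin_le_one z⟩) ?_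
      linarith [Real.pi_gt_three]
  rcases le_total 0 x with h | h
  · rw [abs_of_nonneg h]; exact key x h
  · rw [abs_of_nonpos h]
    have := key (-x) (by linarith)
    rwa [Real.sin_neg, abs_neg] at this

lemma sin_lower {ε θ : ℝ} (hε : 0 < ε)
    (h1 : 5 * ε / 2 ≤ θ) (h2 : θ ≤ π - 5 * ε / 2) :
    5 * ε ≤ π * Real.sin θ := by
  have hπ : 0 < π := Real.pi_pos
  have key : ∀ z : ℝ, 5 * ε / 2 ≤ z → z ≤ π / 2 → 5 * ε ≤ π * Real.sin z := by
    intro z hz1 hz2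
    have hm := mul_le_mul_of_nonneg_right (Real.mul_le_sin (by linarith) hz2) hπ.le
    have he : 2 / π * z * π = 2 * z := by field_simp
    rw [he, mul_comm (Real.sin z) π] at hm
    linarith
  rcases le_total θ (π / 2) with h | h
  · exact key θ h1 h
  · have := key (π - θ) (by linarith) (by linarith)
    rwa [Real.sin_pi_sub] at this

set_option maxHeartbeats 1000000 in
lemma pair_ineq {ε a a₁ b b₁ : ℝ} (hε : 0 < ε) (h5 : 5 * ε ≤ π)
    (ha0 : 0 ≤ a) (ha1 : a ≤ ε) (ha₁0 : 0 ≤ a₁) (ha₁1 : a₁ ≤ ε)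
    (hb0 : 6 * ε ≤ b) (hb1 : b ≤ 2 * π - 5 * ε)
    (hb₁0 : 6 * ε ≤ b₁) (hb₁1 : b₁ ≤ 2 * π - 5 * ε) :
    |Real.sin ((a - a₁) / 2) * Real.sin ((b - b₁) / 2)| ≤
      Real.sin ((b - a₁) / 2) * Real.sin ((b₁ - a) / 2) := by
  have hπ : 0 < π := Real.pi_pos
  have hπ1 : 3.141592 < π := Real.pi_gt_d6
  have hπ2 : π < 3.15 := Real.pi_lt_d2
  have hx1 : 5 * ε / 2 ≤ (b - a₁) / 2 := by linarith
  have hx2 : (b - a₁) / 2 ≤ π - 5 * ε / 2 := by linarith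
  have hy1 : 5 * ε / 2 ≤ (b₁ - a) / 2 := by linarith
  have hy2 : (b₁ - a) / 2 ≤ π - 5 * ε / 2 := by linarith
  have ht1 : 5 * ε / 2 ≤ (b₁ - a₁) / 2 := by linarith
  have ht2 : (b₁ - a₁) / 2 ≤ π - 5 * ε / 2 := by linarith
  have hX := sin_lower hε hx1 hx2
  have hY := sin_lower hε hy1 hy2
  have hxnn : 0 ≤ Real.sin ((b - a₁) / 2) :=
    Real.sin_nonneg_of_nonneg_of_le_pi (by linarith) (by linarith)
  have hynn : 0 ≤ Real.sin ((b₁ - a) / 2) :=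
    Real.sin_nonneg_of_nonneg_of_le_pi (by linarith) (by linarith)
  have htnn : 0 ≤ Real.sin ((b₁ - a₁) / 2) :=
    Real.sin_nonneg_of_nonneg_of_le_pi (by linarith) (by linarith)
  have hu : |Real.sin ((a - a₁) / 2)| ≤ ε / 2 := by
    refine le_trans (abs_sin_le_abs' _) (abs_le.2 ⟨by linarith, by linarith⟩)
  have hty : Real.sin ((b₁ - a₁) / 2) ≤ Real.sin ((b₁ - a) / 2) + ε / 2 := by
    have h := Real.sin_sub_sin ((b₁ - a₁) / 2) ((b₁ - a) / 2)
    have h2 : |Real.sin (((b₁ - a₁) / 2 - (b₁ - a) / 2) / 2)| ≤ ε / 4 := by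
      refine le_trans (abs_sin_le_abs' _) (abs_le.2 ⟨by linarith, by linarith⟩)
    have h3 : |Real.sin ((b₁ - a₁) / 2) - Real.sin ((b₁ - a) / 2)| ≤ ε / 2 := by
      rw [h, abs_mul, abs_mul]
      calc |(2:ℝ)| * |Real.sin (((b₁ - a₁) / 2 - (b₁ - a) / 2) / 2)| *
            |Real.cos (((b₁ - a₁) / 2 + (b₁ - a) / 2) / 2)| ≤ 2 * (ε / 4) * 1 := by
            apply mul_le_mul
            · apply mul_le_mul (by rw [abs_two]) h2 (abs_nonneg _) (by norm_num)
            · exact Real.abs_cos_le_one _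
            · exact abs_nonneg _
            · positivity
        _ = ε / 2 := by ring
    have := (abs_le.1 h3).2
    linarith
  have hv : |Real.sin ((b - b₁) / 2)| ≤
      Real.sin ((b - a₁) / 2) + Real.sin ((b₁ - a₁) / 2) := by
    have e : (b - b₁) / 2 = (b - a₁) / 2 - (b₁ - a₁) / 2 := by ring
    rw [e, Real.sin_sub]
    refine le_trans (abs_sub _ _) ?_
    rw [abs_mul, abs_mul]
    have c1 : |Real.sin ((b - a₁) / 2)| * |Real.cos ((b₁ - a₁) / 2)| ≤
        Real.sin ((b - a₁) / 2) := by
      rw [abs_of_nonneg hxnn]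
      calc Real.sin ((b - a₁) / 2) * |Real.cos ((b₁ - a₁) / 2)| ≤
          Real.sin ((b - a₁) / 2) * 1 :=
            mul_le_mul_of_nonneg_left (Real.abs_cos_le_one _) hxnn
        _ = _ := mul_one _
    have c2 : |Real.cos ((b - a₁) / 2)| * |Real.sin ((b₁ - a₁) / 2)| ≤
        Real.sin ((b₁ - a₁) / 2) := by
      rw [abs_of_nonneg htnn]
      calc |Real.cos ((b - a₁) / 2)| * Real.sin ((b₁ - a₁) / 2) ≤
          1 * Real.sin ((b₁ - a₁) / 2) :=
            mul_le_mul_of_nonneg_right (Real.abs_cos_le_one _) htnn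
        _ = _ := one_mul _
    linarith
  have step : |Real.sin ((a - a₁) / 2) * Real.sin ((b - b₁) / 2)| ≤
      (ε / 2) * (Real.sin ((b - a₁) / 2) + Real.sin ((b₁ - a) / 2) + ε / 2) := by
    rw [abs_mul]
    calc |Real.sin ((a - a₁) / 2)| * |Real.sin ((b - b₁) / 2)| ≤
        (ε / 2) * (Real.sin ((b - a₁) / 2) + Real.sin ((b₁ - a₁) / 2)) := by
          apply mul_le_mul hu hv (abs_nonneg _) (by linarith)
      _ ≤ (ε / 2) * (Real.sin ((b - a₁) / 2) + Real.sin ((b₁ - a) / 2) + ε / 2) := by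
          apply mul_le_mul_of_nonneg_left _ (by linarith)
          linarith
  refine le_trans step ?_
  set P := Real.sin ((b - a₁) / 2) with hP
  set Q := Real.sin ((b₁ - a) / 2) with hQ
  have key : 0 ≤ (π * P - 5 * ε) * (π * Q - 5 * ε) :=
    mul_nonneg (by linarith) (by linarith)
  have h6 : 0 ≤ (π * P + π * Q - 10 * ε) * (ε * (5 - π / 2)) :=
    mul_nonneg (by linarith) (by nlinarith)
  nlinarith [key, h6, mul_pos hπ hπ, mul_pos (mul_pos hε hε) hπ, mul_pos hε hε]

end Helpers

/-- Slack comparison for cyclic polygons: with `X` an arc of length `ε` of the unit circle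
and `Y` the set of points of the circle at arc-distance at least `5ε` from all of `X`, if
`v` is a vertex on `X`, `w` a vertex in `Y`, `f = [p₁,p₂]` an edge with both endpoints on
`X`, and `g = [q₁,q₂]` an edge with both endpoints in `Y`, then
`dist(v,ℓ_f)·dist(w,ℓ_g) ≤ dist(v,ℓ_g)·dist(w,ℓ_f)`. -/
theorem cyclic_polygon_slack_inequality
    (ε θ₀ : ℝ) (hε : 0 < ε)
    (X Y : Set (EuclideanSpace ℝ (Fin 2)))
    (hX : X = {p : EuclideanSpace ℝ (Fin 2) |
      ∃ θ ∈ Set.Icc θ₀ (θ₀ + ε), p 0 = Real.cos θ ∧ p 1 = Real.sin θ})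
    (hY : Y = {y : EuclideanSpace ℝ (Fin 2) |
      y ∈ Metric.sphere (0 : EuclideanSpace ℝ (Fin 2)) 1 ∧ ∀ x ∈ X, 5 * ε ≤ arcDist x y})
    (V : Finset (EuclideanSpace ℝ (Fin 2)))
    (hV : (V : Set (EuclideanSpace ℝ (Fin 2))) ⊆
      Metric.sphere (0 : EuclideanSpace ℝ (Fin 2)) 1)
    (P : Set (EuclideanSpace ℝ (Fin 2)))
    (hP : P = convexHull ℝ (V : Set (EuclideanSpace ℝ (Fin 2))))
    (hext : ∀ u ∈ V, u ∈ Set.extremePoints ℝ P)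
    (v w p₁ p₂ q₁ q₂ : EuclideanSpace ℝ (Fin 2))
    (hvV : v ∈ V) (hwV : w ∈ V) (hp₁V : p₁ ∈ V) (hp₂V : p₂ ∈ V)
    (hq₁V : q₁ ∈ V) (hq₂V : q₂ ∈ V)
    (hvX : v ∈ X) (hp₁X : p₁ ∈ X) (hp₂X : p₂ ∈ X)
    (hwY : w ∈ Y) (hq₁Y : q₁ ∈ Y) (hq₂Y : q₂ ∈ Y)
    (hp : p₁ ≠ p₂) (hq : q₁ ≠ q₂)
    (hedgef : Disjoint
      (convexHull ℝ ((V : Set (EuclideanSpace ℝ (Fin 2))) \ {p₁, p₂}))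
      (affineSpan ℝ ({p₁, p₂} : Set (EuclideanSpace ℝ (Fin 2))) :
        Set (EuclideanSpace ℝ (Fin 2))))
    (hedgeg : Disjoint
      (convexHull ℝ ((V : Set (EuclideanSpace ℝ (Fin 2))) \ {q₁, q₂}))
      (affineSpan ℝ ({q₁, q₂} : Set (EuclideanSpace ℝ (Fin 2))) :
        Set (EuclideanSpace ℝ (Fin 2)))) :
    Metric.infDist v (affineSpan ℝ ({p₁, p₂} : Set (EuclideanSpace ℝ (Fin 2))) :
        Set (EuclideanSpace ℝ (Fin 2))) *
      Metric.infDist w (affineSpan ℝ ({q₁, q₂} : Set (EuclideanSpace ℝ (Fin 2))) :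
        Set (EuclideanSpace ℝ (Fin 2))) ≤
    Metric.infDist v (affineSpan ℝ ({q₁, q₂} : Set (EuclideanSpace ℝ (Fin 2))) :
        Set (EuclideanSpace ℝ (Fin 2))) *
      Metric.infDist w (affineSpan ℝ ({p₁, p₂} : Set (EuclideanSpace ℝ (Fin 2))) :
        Set (EuclideanSpace ℝ (Fin 2))) := by
  clear hP hext hedgef hedgeg hV hvV hwV hp₁V hp₂V hq₁V hq₂V
  have hπ : 0 < Real.pi := Real.pi_pos
  -- angles for the X points
  rw [hX] at hvX hp₁X hp₂X
  obtain ⟨θv, hθv, hv0, hv1⟩ := hvX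
  obtain ⟨θ1, hθ1, h10, h11⟩ := hp₁X
  obtain ⟨θ2, hθ2, h20, h21⟩ := hp₂X
  have hvpt : v = pt θv := ext2 _ _ (by rw [hv0, pt0]) (by rw [hv1, pt1])
  have hp1pt : p₁ = pt θ1 := ext2 _ _ (by rw [h10, pt0]) (by rw [h11, pt1])
  have hp2pt : p₂ = pt θ2 := ext2 _ _ (by rw [h20, pt0]) (by rw [h21, pt1])
  -- the two endpoints of the arc X
  have hm0 : pt θ₀ ∈ X := by
    rw [hX]; exact ⟨θ₀, ⟨le_refl _, by linarith⟩, rfl, rfl⟩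
  have hm1 : pt (θ₀ + ε) ∈ X := by
    rw [hX]; exact ⟨θ₀ + ε, ⟨by linarith, le_refl _⟩, rfl, rfl⟩
  -- angles for the Y points
  rw [hY] at hwY hq₁Y hq₂Y
  obtain ⟨hwS, hwA⟩ := hwY
  obtain ⟨hq1S, hq1A⟩ := hq₁Y
  obtain ⟨hq2S, hq2A⟩ := hq₂Y
  have hwa : 5 * ε ≤ Real.arccos ⟪pt θ₀, w⟫ := hwA _ hm0
  have hwb : 5 * ε ≤ Real.arccos ⟪pt (θ₀ + ε), w⟫ := hwA _ hm1
  obtain ⟨β, hwpt, hβ1, hβ2⟩ := Yangle hε w hwS hwa hwb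
  obtain ⟨β₁, hq1pt, hβ₁1, hβ₁2⟩ := Yangle hε q₁ hq1S (hq1A _ hm0) (hq1A _ hm1)
  obtain ⟨β₂, hq2pt, hβ₂1, hβ₂2⟩ := Yangle hε q₂ hq2S (hq2A _ hm0) (hq2A _ hm1)
  have h5π : 5 * ε ≤ Real.pi := le_trans hwa (Real.arccos_le_pi _)
  -- distinctness
  have hpne : pt θ1 ≠ pt θ2 := by rw [← hp1pt, ← hp2pt]; exact hp
  have hqne : pt (θ₀ + β₁) ≠ pt (θ₀ + β₂) := by rw [← hq1pt, ← hq2pt]; exact hq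
  -- rewrite the goal via distance formulas
  rw [hvpt, hwpt, hp1pt, hp2pt, hq1pt, hq2pt,
    chord_dist θv θ1 θ2 hpne, chord_dist (θ₀ + β) (θ₀ + β₁) (θ₀ + β₂) hqne,
    chord_dist θv (θ₀ + β₁) (θ₀ + β₂) hqne, chord_dist (θ₀ + β) θ1 θ2 hpne]
  -- canonicalize the sine arguments
  rw [show (θ₀ + β - (θ₀ + β₁)) / 2 = (β - β₁) / 2 by ring,
    show (θ₀ + β - (θ₀ + β₂)) / 2 = (β - β₂) / 2 by ring,
    show (θv - (θ₀ + β₁)) / 2 = -((β₁ - (θv - θ₀)) / 2) by ring,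
    show (θv - (θ₀ + β₂)) / 2 = -((β₂ - (θv - θ₀)) / 2) by ring,
    show (θ₀ + β - θ1) / 2 = (β - (θ1 - θ₀)) / 2 by ring,
    show (θ₀ + β - θ2) / 2 = (β - (θ2 - θ₀)) / 2 by ring,
    show (θv - θ1) / 2 = ((θv - θ₀) - (θ1 - θ₀)) / 2 by ring,
    show (θv - θ2) / 2 = ((θv - θ₀) - (θ2 - θ₀)) / 2 by ring,
    Real.sin_neg, Real.sin_neg]
  -- nonnegativity of the right-hand factors
  have ha0 : 0 ≤ θv - θ₀ := by linarith [hθv.1]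
  have ha1 : θv - θ₀ ≤ ε := by linarith [hθv.2]
  have h1a0 : 0 ≤ θ1 - θ₀ := by linarith [hθ1.1]
  have h1a1 : θ1 - θ₀ ≤ ε := by linarith [hθ1.2]
  have h2a0 : 0 ≤ θ2 - θ₀ := by linarith [hθ2.1]
  have h2a1 : θ2 - θ₀ ≤ ε := by linarith [hθ2.2]
  have nn1 : 0 ≤ Real.sin ((β₁ - (θv - θ₀)) / 2) :=
    Real.sin_nonneg_of_nonneg_of_le_pi (by linarith) (by linarith)
  have nn2 : 0 ≤ Real.sin ((β₂ - (θv - θ₀)) / 2) :=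
    Real.sin_nonneg_of_nonneg_of_le_pi (by linarith) (by linarith)
  have nn3 : 0 ≤ Real.sin ((β - (θ1 - θ₀)) / 2) :=
    Real.sin_nonneg_of_nonneg_of_le_pi (by linarith) (by linarith)
  have nn4 : 0 ≤ Real.sin ((β - (θ2 - θ₀)) / 2) :=
    Real.sin_nonneg_of_nonneg_of_le_pi (by linarith) (by linarith)
  -- the two pairwise inequalities
  have pair1 := pair_ineq hε h5π ha0 ha1 h1a0 h1a1 hβ1 hβ2 hβ₁1 hβ₁2
  have pair2 := pair_ineq hε h5π ha0 ha1 h2a0 h2a1 hβ1 hβ2 hβ₂1 hβ₂2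
  -- assemble
  have eLHS : |2 * (Real.sin (((θv - θ₀) - (θ1 - θ₀)) / 2) *
        Real.sin (((θv - θ₀) - (θ2 - θ₀)) / 2))| *
      |2 * (Real.sin ((β - β₁) / 2) * Real.sin ((β - β₂) / 2))| =
      4 * (|Real.sin (((θv - θ₀) - (θ1 - θ₀)) / 2) * Real.sin ((β - β₁) / 2)| *
        |Real.sin (((θv - θ₀) - (θ2 - θ₀)) / 2) * Real.sin ((β - β₂) / 2)|) := by
    rw [← abs_mul]
    rw [show (2 * (Real.sin (((θv - θ₀) - (θ1 - θ₀)) / 2) *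
        Real.sin (((θv - θ₀) - (θ2 - θ₀)) / 2))) *
      (2 * (Real.sin ((β - β₁) / 2) * Real.sin ((β - β₂) / 2))) =
      4 * ((Real.sin (((θv - θ₀) - (θ1 - θ₀)) / 2) * Real.sin ((β - β₁) / 2)) *
        (Real.sin (((θv - θ₀) - (θ2 - θ₀)) / 2) * Real.sin ((β - β₂) / 2))) by ring]
    rw [abs_mul, abs_mul]
    norm_num
  have eRHS : |2 * (-Real.sin ((β₁ - (θv - θ₀)) / 2) * -Real.sin ((β₂ - (θv - θ₀)) / 2))| *
      |2 * (Real.sin ((β - (θ1 - θ₀)) / 2) * Real.sin ((β - (θ2 - θ₀)) / 2))| =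
      4 * ((Real.sin ((β - (θ1 - θ₀)) / 2) * Real.sin ((β₁ - (θv - θ₀)) / 2)) *
        (Real.sin ((β - (θ2 - θ₀)) / 2) * Real.sin ((β₂ - (θv - θ₀)) / 2))) := by
    rw [← abs_mul]
    rw [show (2 * (-Real.sin ((β₁ - (θv - θ₀)) / 2) * -Real.sin ((β₂ - (θv - θ₀)) / 2))) *
      (2 * (Real.sin ((β - (θ1 - θ₀)) / 2) * Real.sin ((β - (θ2 - θ₀)) / 2))) =
      4 * ((Real.sin ((β - (θ1 - θ₀)) / 2) * Real.sin ((β₁ - (θv - θ₀)) / 2)) *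
        (Real.sin ((β - (θ2 - θ₀)) / 2) * Real.sin ((β₂ - (θv - θ₀)) / 2))) by ring]
    rw [abs_of_nonneg (mul_nonneg (by norm_num : (0:ℝ) ≤ 4)
      (mul_nonneg (mul_nonneg nn3 nn1) (mul_nonneg nn4 nn2)))]
  rw [eLHS, eRHS]
  have final := mul_le_mul pair1 pair2 (abs_nonneg _) (mul_nonneg nn3 nn1)
  linarith
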